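/- arXiv:1107.2716 — 2 statements merged into one kernel-verified Lean document; each statement's English description precedes it below -/
import Mathlib

section
/- Let (Ω, F, P, (F_t)_{t∈[0,T]}) be a filtered probability space satisfying the usual conditions with F_T = F. Let 𝒵 be a nonempty set of strictly positive càdlàg martingales Z with Z_0 = 1 and E[Z_T log Z_T] < ∞, and assume 𝒵 is stable under pasting: for all Z, Ẑ ∈ 𝒵, every stopping time σ with values in [0,T], and every A ∈ F_σ, the process Z̃_t := 1_{{t < σ}} Ẑ_t + 1_{{t ≥ σ}} ( 1_A (Z_t/Z_σ) Ẑ_σ + 1_{A^c} Ẑ_t ), t ∈ [0,T], again belongs to 𝒵. Suppose Ẑ ∈ 𝒵 minimizes the entropy E[Z_T log Z_T] over Z ∈ 𝒵, and suppose some Z ∈ 𝒵 satisfies E[(Z_T/Z_τ) log(Z_T/Z_τ) | F_τ] ≤ K almost surely for every stopping time τ with values in [0,T]. Then Ẑ satisfies E[(Ẑ_T/Ẑ_τ) log(Ẑ_T/Ẑ_τ) | F_τ] ≤ K almost surely for every stopping time τ with values in [0,T]. -/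
open MeasureTheory Set Filter Topology

/-- The usual conditions for a filtration indexed by `ℝ`: right-continuity and
completeness (all null sets lie in `ℱ 0`). -/
def UsualConditions {Ω : Type*} {m0 : MeasurableSpace Ω} (ℱ : Filtration ℝ m0)
    (P : Measure Ω) : Prop :=
  (∀ t : ℝ, (ℱ t : MeasurableSpace Ω) = ⨅ s ∈ Ioi t, (ℱ s : MeasurableSpace Ω)) ∧
  (∀ s : Set Ω, P s = 0 → MeasurableSet[ℱ 0] s)

/-- A process is a martingale on the time interval `[0, T]` with respect to the
filtration `ℱ` and measure `μ`. -/
def MartingaleOn {Ω : Type*} {m0 : MeasurableSpace Ω} (ℱ : Filtration ℝ m0)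
    (μ : Measure Ω) (T : ℝ) (X : ℝ → Ω → ℝ) : Prop :=
  (∀ t ∈ Icc (0 : ℝ) T, StronglyMeasurable[ℱ t] (X t)) ∧
  (∀ t ∈ Icc (0 : ℝ) T, Integrable (X t) μ) ∧
  (∀ s t : ℝ, s ∈ Icc (0 : ℝ) T → t ∈ Icc (0 : ℝ) T → s ≤ t →
    μ[X t | ℱ s] =ᵐ[μ] X s)

/-- A real function is càdlàg (right-continuous with left limits) on `[0, T]`. -/
def CadlagOn (T : ℝ) (f : ℝ → ℝ) : Prop :=
  (∀ t ∈ Icc (0 : ℝ) T, ContinuousWithinAt f (Icc t T) t) ∧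
  (∀ t ∈ Ioc (0 : ℝ) T, ∃ l : ℝ, Tendsto f (𝓝[Ico 0 t] t) (𝓝 l))

noncomputable def dyadUp (T : ℝ) (k : ℕ) (x : ℝ) : ℝ :=
  min T ((⌊x * 2 ^ k⌋ + 1) / 2 ^ k)

lemma dyadUp_le_T {T x : ℝ} (hx : x ≤ T) (k : ℕ) : dyadUp T k x ≤ T := min_le_left _ _

lemma le_dyadUp {T x : ℝ} (hx : x ≤ T) (k : ℕ) : x ≤ dyadUp T k x := by
  refine le_min hx ?_
  have h2 : (0:ℝ) < 2 ^ k := by positivity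
  rw [le_div_iff₀ h2]
  exact (Int.lt_floor_add_one (x * 2 ^ k)).le

lemma dyadUp_le_add {T x : ℝ} (k : ℕ) : dyadUp T k x ≤ x + (2 ^ k)⁻¹ := by
  refine (min_le_right _ _).trans ?_
  have h2 : (0:ℝ) < 2 ^ k := by positivity
  rw [div_le_iff₀ h2, add_mul, inv_mul_cancel₀ h2.ne']
  have := Int.floor_le (x * 2 ^ k)
  linarith

lemma dyadUp_nonneg {T x : ℝ} (hT : 0 < T) (hx : 0 ≤ x) (k : ℕ) : 0 ≤ dyadUp T k x := by
  refine le_min hT.le ?_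
  have h2 : (0:ℝ) < 2 ^ k := by positivity
  apply div_nonneg _ h2.le
  have h : (0:ℤ) ≤ ⌊x * 2 ^ k⌋ := Int.floor_nonneg.2 (by positivity)
  have h' : (0:ℝ) ≤ (⌊x * 2 ^ k⌋ : ℝ) := by exact_mod_cast h
  push_cast
  linarith

lemma dyadUp_antitone {T x : ℝ} (k : ℕ) : dyadUp T (k + 1) x ≤ dyadUp T k x := by
  refine min_le_min le_rfl ?_
  have h2 : (0:ℝ) < 2 ^ k := by positivity
  have h2' : (0:ℝ) < 2 ^ (k+1) := by positivity
  rw [div_le_div_iff₀ h2' h2]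
  have h1 : (⌊x * 2 ^ (k+1)⌋ : ℝ) < 2 * (⌊x * 2 ^ k⌋ + 1) := by
    calc (⌊x * 2 ^ (k+1)⌋ : ℝ) ≤ x * 2 ^ (k+1) := Int.floor_le _
    _ = 2 * (x * 2 ^ k) := by ring
    _ < 2 * (⌊x * 2 ^ k⌋ + 1) := by
        have := Int.lt_floor_add_one (x * 2 ^ k); linarith
  have h1' : (⌊x * 2 ^ (k+1)⌋ : ℤ) < 2 * (⌊x * 2 ^ k⌋ + 1) := by exact_mod_cast h1
  have h1'' : (⌊x * 2 ^ (k+1)⌋ : ℤ) + 1 ≤ 2 * (⌊x * 2 ^ k⌋ + 1) := h1'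
  calc ((⌊x * 2 ^ (k+1)⌋ : ℝ) + 1) * 2 ^ k ≤ (2 * (⌊x * 2 ^ k⌋ + 1)) * 2 ^ k := by
        have : ((⌊x * 2 ^ (k+1)⌋ : ℝ) + 1) ≤ 2 * ((⌊x * 2 ^ k⌋ : ℝ) + 1) := by exact_mod_cast h1''
        nlinarith
    _ = ((⌊x * 2 ^ k⌋ : ℝ) + 1) * 2 ^ (k+1) := by ring

lemma dyadUp_mem_range (T : ℝ) (k : ℕ) (x : ℝ) :
    dyadUp T k x ∈ Set.range (fun j : ℤ => min T ((j + 1 : ℝ) / 2 ^ k)) :=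
  ⟨⌊x * 2 ^ k⌋, rfl⟩

section
variable {Ω : Type*} {m0 : MeasurableSpace Ω} {ℱ : Filtration ℝ m0}

lemma dyadUp_isStoppingTime {T : ℝ} (hT : 0 < T) {τ : Ω → ℝ}
    (hτ : IsStoppingTime ℱ (fun ω => (τ ω : WithTop ℝ))) (hrange : ∀ ω, τ ω ∈ Icc (0:ℝ) T) (k : ℕ) :
    IsStoppingTime ℱ (fun ω => (dyadUp T k (τ ω) : WithTop ℝ)) := by
  intro t
  simp only [WithTop.coe_le_coe]
  by_cases hTt : T ≤ t
  · have : {ω | dyadUp T k (τ ω) ≤ t} = Set.univ := by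
      ext ω; simp only [Set.mem_setOf_eq, Set.mem_univ, iff_true]
      exact (dyadUp_le_T (hrange ω).2 k).trans hTt
    rw [this]; exact MeasurableSet.univ
  · push_neg at hTt
    have h2 : (0:ℝ) < 2 ^ k := by positivity
    set s : ℝ := (⌊t * 2 ^ k⌋ : ℝ) / 2 ^ k with hs
    have hst : s ≤ t := by
      rw [hs, div_le_iff₀ h2]; exact Int.floor_le _
    have hset : {ω | dyadUp T k (τ ω) ≤ t} = {ω | τ ω < s} := by
      ext ω
      simp only [Set.mem_setOf_eq, dyadUp, min_le_iff]
      constructor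
      · rintro (h | h)
        · exact absurd h (not_le.2 hTt)
        · rw [div_le_iff₀ h2] at h
          have h' : ⌊τ ω * 2 ^ k⌋ + 1 ≤ ⌊t * 2 ^ k⌋ := by
            rw [Int.add_one_le_iff, ← @Int.add_one_le_iff ⌊τ ω * 2 ^ k⌋]
            exact_mod_cast Int.le_floor.2 (by exact_mod_cast h)
          have h'' : τ ω * 2 ^ k < (⌊t * 2 ^ k⌋ : ℝ) := by
            have := Int.lt_floor_add_one (τ ω * 2 ^ k)
            have hc : ((⌊τ ω * 2 ^ k⌋ : ℝ) + 1) ≤ (⌊t * 2 ^ k⌋ : ℝ) := by exact_mod_cast h'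
            linarith
          rw [hs, lt_div_iff₀ h2]
          exact h''
      · intro h
        right
        rw [div_le_iff₀ h2]
        rw [hs, lt_div_iff₀ h2] at h
        have : ⌊τ ω * 2 ^ k⌋ < ⌊t * 2 ^ k⌋ := Int.floor_lt.2 (by exact_mod_cast h)
        have : (⌊τ ω * 2 ^ k⌋ : ℝ) + 1 ≤ (⌊t * 2 ^ k⌋ : ℝ) := by exact_mod_cast this
        calc (⌊τ ω * 2 ^ k⌋ : ℝ) + 1 ≤ (⌊t * 2 ^ k⌋ : ℝ) := this
          _ ≤ t * 2 ^ k := Int.floor_le _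
    rw [hset]
    exact ℱ.mono hst _ (by have h := hτ.measurableSet_lt s; simp only [WithTop.coe_lt_coe] at h; exact h)

lemma dyadUp_countable_range {T : ℝ} (τ : Ω → ℝ) (k : ℕ) :
    (Set.range (fun ω => dyadUp T k (τ ω))).Countable := by
  apply Set.Countable.mono _ (Set.countable_range (fun j : ℤ => min T ((j + 1 : ℝ) / 2 ^ k)))
  rintro x ⟨ω, rfl⟩
  exact dyadUp_mem_range T k (τ ω)

/-- Stopped value of an adapted process at a countable-range stopping time is measurable
w.r.t. the stopping-time σ-algebra. -/
lemma stoppedValue_stronglyMeasurable_of_countable_range {T : ℝ} {X : ℝ → Ω → ℝ}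
    (hX : ∀ t ∈ Icc (0:ℝ) T, StronglyMeasurable[ℱ t] (X t)) {σ : Ω → ℝ}
    (hσ : IsStoppingTime ℱ (fun ω => (σ ω : WithTop ℝ))) (hcount : (Set.range σ).Countable)
    (hrange : ∀ ω, σ ω ∈ Icc (0:ℝ) T) :
    StronglyMeasurable[hσ.measurableSpace] (fun ω => X (σ ω) ω) := by
  apply Measurable.stronglyMeasurable
  intro B hB
  suffices hall : ∀ t : ℝ, MeasurableSet[ℱ t] ({ω | X (σ ω) ω ∈ B} ∩ {ω | σ ω ≤ t}) by
    have hT' : MeasurableSet[ℱ T] {ω | X (σ ω) ω ∈ B} := by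
      have h := hall T
      rwa [show {ω | σ ω ≤ T} = Set.univ from Set.eq_univ_of_forall (fun ω => (hrange ω).2),
        Set.inter_univ] at h
    refine (hσ.measurableSet _).2 ⟨le_iSup (fun t => (ℱ t : MeasurableSpace Ω)) T _ hT', fun t => ?_⟩
    simp only [WithTop.coe_le_coe]
    exact hall t
  intro t
  have hset : {ω | X (σ ω) ω ∈ B} ∩ {ω | σ ω ≤ t}
      = ⋃ i ∈ Set.range σ, ({ω | σ ω = i} ∩ (X i) ⁻¹' B ∩ {ω | σ ω ≤ t}) := by
    ext ω
    simp only [Set.mem_inter_iff, Set.mem_setOf_eq, Set.mem_iUnion, Set.mem_preimage,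
      Set.mem_range, exists_prop]
    constructor
    · rintro ⟨hXB, hle⟩
      exact ⟨σ ω, ⟨ω, rfl⟩, ⟨rfl, hXB⟩, hle⟩
    · rintro ⟨i, -, ⟨hσi, hXB⟩, hle⟩
      exact ⟨by rwa [hσi], hle⟩
  show MeasurableSet[ℱ t] ({ω | X (σ ω) ω ∈ B} ∩ {ω | σ ω ≤ t})
  rw [hset]
  refine MeasurableSet.biUnion hcount fun i hi => ?_
  by_cases hit : i ≤ t
  · obtain ⟨ω₀, rfl⟩ := hi
    refine MeasurableSet.inter (MeasurableSet.inter ?_ ?_) (by have h := hσ t; simp only [WithTop.coe_le_coe] at h; exact h)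
    · exact ℱ.mono hit _ (by
        have h := hσ.measurableSet_eq_of_countable_range (by
          have hc := hcount.image (fun x : ℝ => (x : WithTop ℝ)); rwa [← Set.range_comp] at hc) (σ ω₀)
        simp only [WithTop.coe_inj] at h; exact h)
    · exact ℱ.mono hit _ ((hX _ (hrange ω₀)).measurable hB)
  · have : {ω | σ ω = i} ∩ (X i) ⁻¹' B ∩ {ω | σ ω ≤ t} = ∅ := by
      ext ω
      simp only [Set.mem_inter_iff, Set.mem_setOf_eq, Set.mem_empty_iff_false, iff_false]
      rintro ⟨⟨rfl, -⟩, hle⟩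
      exact hit hle
    rw [this]
    exact @MeasurableSet.empty _ (ℱ t)

end

section
variable {Ω : Type*} {m0 : MeasurableSpace Ω} {ℱ : Filtration ℝ m0}

/-- Under right-continuity of the filtration, any set in all the `F_{σ k}` for the dyadic
approximations `σ k` of `τ` from above lies in `F_τ`. -/
lemma mem_stoppingTime_of_forall_dyadUp {T : ℝ} (hT : 0 < T)
    (hrc : ∀ t : ℝ, (ℱ t : MeasurableSpace Ω) = ⨅ s ∈ Ioi t, (ℱ s : MeasurableSpace Ω))
    {τ : Ω → ℝ} (hτ : IsStoppingTime ℱ (fun ω => (τ ω : WithTop ℝ))) (hrange : ∀ ω, τ ω ∈ Icc (0:ℝ) T)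
    {s : Set Ω}
    (hs : ∀ k : ℕ, MeasurableSet[(dyadUp_isStoppingTime hT hτ hrange k).measurableSpace] s) :
    MeasurableSet[hτ.measurableSpace] s := by
  refine (hτ.measurableSet _).2 ⟨((IsStoppingTime.measurableSet _ _).1 (hs 0)).1, fun t => ?_⟩
  simp only [WithTop.coe_le_coe]
  -- Step 1 : for every u, s ∩ {τ < u} ∈ ℱ u
  have step1 : ∀ u : ℝ, MeasurableSet[ℱ u] (s ∩ {ω | τ ω < u}) := by
    intro u
    have hset : s ∩ {ω | τ ω < u} = ⋃ k : ℕ, s ∩ {ω | dyadUp T k (τ ω) < u} := by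
      ext ω
      simp only [Set.mem_inter_iff, Set.mem_setOf_eq, Set.mem_iUnion]
      constructor
      · rintro ⟨hωs, hlt⟩
        obtain ⟨k, hk⟩ := pow_unbounded_of_one_lt (R := ℝ) (u - τ ω)⁻¹ one_lt_two
        refine ⟨k, hωs, ?_⟩
        have h2 : (0:ℝ) < 2 ^ k := by positivity
        have : (2 ^ k : ℝ)⁻¹ < u - τ ω := by
          rw [inv_lt_comm₀ h2 (by linarith : (0:ℝ) < u - τ ω)]
          exact hk
        have := dyadUp_le_add (T := T) (x := τ ω) k
        linarith
      · rintro ⟨k, hωs, hlt⟩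
        exact ⟨hωs, lt_of_le_of_lt (le_dyadUp (hrange ω).2 k) hlt⟩
    rw [hset]
    refine MeasurableSet.iUnion fun k => ?_
    have hsub : s ∩ {ω | dyadUp T k (τ ω) < u}
        = ⋃ q : {q : ℚ // (q : ℝ) < u}, s ∩ {ω | dyadUp T k (τ ω) ≤ (q : ℝ)} := by
      ext ω
      simp only [Set.mem_inter_iff, Set.mem_setOf_eq, Set.mem_iUnion]
      constructor
      · rintro ⟨hωs, hlt⟩
        obtain ⟨q, hq1, hq2⟩ := exists_rat_btwn hlt
        exact ⟨⟨q, hq2⟩, hωs, hq1.le⟩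
      · rintro ⟨⟨q, hq⟩, hωs, hle⟩
        exact ⟨hωs, lt_of_le_of_lt hle hq⟩
    rw [hsub]
    refine MeasurableSet.iUnion fun q => ?_
    exact ℱ.mono q.2.le _ (by have h := ((IsStoppingTime.measurableSet _ _).1 (hs k)).2 (q : ℝ); simp only [WithTop.coe_le_coe] at h; exact h)
  -- Step 2 : s ∩ {τ ≤ t} ∈ ℱ t using right-continuity
  rw [hrc t]
  rw [MeasurableSpace.measurableSet_iInf]
  intro u
  rw [MeasurableSpace.measurableSet_iInf]
  intro hu
  have : s ∩ {ω | τ ω ≤ t} = (s ∩ {ω | τ ω < u}) ∩ {ω | τ ω ≤ t} := by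
    ext ω
    simp only [Set.mem_inter_iff, Set.mem_setOf_eq]
    constructor
    · rintro ⟨hωs, hle⟩
      exact ⟨⟨hωs, lt_of_le_of_lt hle hu⟩, hle⟩
    · rintro ⟨⟨hωs, -⟩, hle⟩
      exact ⟨hωs, hle⟩
  rw [this]
  exact (step1 u).inter (ℱ.mono (le_of_lt hu) _ (by have h := hτ t; simp only [WithTop.coe_le_coe] at h; exact h))

/-- A right-continuous adapted process evaluated at a bounded stopping time is measurable with
respect to the stopping time σ-algebra, under the usual conditions. -/
lemma stoppedValue_stronglyMeasurable_of_rightContinuous {T : ℝ} (hT : 0 < T)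
    (hrcF : ∀ t : ℝ, (ℱ t : MeasurableSpace Ω) = ⨅ s ∈ Ioi t, (ℱ s : MeasurableSpace Ω))
    {X : ℝ → Ω → ℝ} (hX : ∀ t ∈ Icc (0:ℝ) T, StronglyMeasurable[ℱ t] (X t))
    (hrc : ∀ ω, ∀ t ∈ Icc (0:ℝ) T, ContinuousWithinAt (fun s => X s ω) (Icc t T) t)
    {τ : Ω → ℝ} (hτ : IsStoppingTime ℱ (fun ω => (τ ω : WithTop ℝ))) (hrange : ∀ ω, τ ω ∈ Icc (0:ℝ) T) :
    StronglyMeasurable[hτ.measurableSpace] (fun ω => X (τ ω) ω) := by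
  set σ : ℕ → Ω → ℝ := fun k ω => dyadUp T k (τ ω) with hσdef
  have hσ : ∀ k, IsStoppingTime ℱ (fun ω => (σ k ω : WithTop ℝ)) := fun k => dyadUp_isStoppingTime hT hτ hrange k
  have hσrange : ∀ k ω, σ k ω ∈ Icc (0:ℝ) T :=
    fun k ω => ⟨dyadUp_nonneg hT (hrange ω).1 k, dyadUp_le_T (hrange ω).2 k⟩
  have hτσ : ∀ k ω, τ ω ≤ σ k ω := fun k ω => le_dyadUp (hrange ω).2 k
  have hanti : ∀ k, ∀ ω, σ (k+1) ω ≤ σ k ω := fun k ω => dyadUp_antitone k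
  have hmono : ∀ j k, k ≤ j → ∀ ω, σ j ω ≤ σ k ω := by
    intro j k hkj
    induction j with
    | zero => intro ω; have : k = 0 := Nat.le_zero.mp hkj; simp [this]
    | succ j ih =>
      rcases Nat.lt_or_ge k (j+1) with h | h
      · intro ω; exact (hanti j ω).trans (ih (Nat.lt_succ_iff.mp h) ω)
      · have : k = j + 1 := le_antisymm hkj h
        intro ω; simp [this]
  -- convergence
  have htend : ∀ ω, Tendsto (fun k => X (σ k ω) ω) atTop (𝓝 (X (τ ω) ω)) := by
    intro ω
    have h1 : Tendsto (fun k => σ k ω) atTop (𝓝 (τ ω)) := by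
      have hub : ∀ k, σ k ω ≤ τ ω + (2 ^ k : ℝ)⁻¹ := fun k => dyadUp_le_add k
      have hlb : ∀ k, τ ω ≤ σ k ω := fun k => hτσ k ω
      have htendub : Tendsto (fun k : ℕ => τ ω + (2 ^ k : ℝ)⁻¹) atTop (𝓝 (τ ω + 0)) := by
        exact tendsto_const_nhds.add (tendsto_inv_atTop_zero.comp
          (tendsto_pow_atTop_atTop_of_one_lt (by norm_num)))
      rw [add_zero] at htendub
      exact tendsto_of_tendsto_of_tendsto_of_le_of_le tendsto_const_nhds htendub hlb hub
    have h2 : Tendsto (fun k => σ k ω) atTop (𝓝[Icc (τ ω) T] (τ ω)) := by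
      rw [tendsto_nhdsWithin_iff]
      exact ⟨h1, Filter.Eventually.of_forall fun k => ⟨hτσ k ω, (hσrange k ω).2⟩⟩
    exact (hrc ω (τ ω) (hrange ω)).tendsto.comp h2
  -- measurability w.r.t. each F_{σ k}
  have hmeas : ∀ k, StronglyMeasurable[(hσ k).measurableSpace] (fun ω => X (τ ω) ω) := by
    intro k
    apply stronglyMeasurable_of_tendsto (u := atTop)
      (f := fun j => fun ω => X (σ (k + j) ω) ω)
    · intro j
      have h1 : StronglyMeasurable[(hσ (k + j)).measurableSpace] (fun ω => X (σ (k+j) ω) ω) :=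
        stoppedValue_stronglyMeasurable_of_countable_range hX (hσ (k+j))
          (dyadUp_countable_range τ (k+j)) (hσrange (k+j))
      exact h1.mono ((hσ (k+j)).measurableSpace_mono (hσ k) (fun ω => WithTop.coe_le_coe.2 (hmono (k+j) k (Nat.le_add_right k j) ω)))
    · rw [tendsto_pi_nhds]
      intro ω
      have := (htend ω).comp (tendsto_add_atTop_nat k)
      have heq : ((fun j => X (σ j ω) ω) ∘ fun a => a + k) = fun i => X (σ (k + i) ω) ω := by
        funext i; simp [Nat.add_comm]
      rwa [heq] at this
  -- conclude
  have hmeas' : ∀ B : Set ℝ, MeasurableSet B →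
      MeasurableSet[hτ.measurableSpace] ((fun ω => X (τ ω) ω) ⁻¹' B) := by
    intro B hB
    apply mem_stoppingTime_of_forall_dyadUp hT hrcF hτ hrange
    intro k
    exact (hmeas k).measurable hB
  exact Measurable.stronglyMeasurable hmeas'

end
lemma integral_mul_eq_integral_mul_condexp {Ω : Type*} {m0 : MeasurableSpace Ω}
    (P : Measure Ω) [IsFiniteMeasure P] {m : MeasurableSpace Ω} (hm : m ≤ m0)
    {h f : Ω → ℝ} (c : ℝ) (hh : StronglyMeasurable[m] h) (hbd : ∀ ω, |h ω| ≤ c)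
    (hf : Integrable f P) :
    ∫ ω, h ω * f ω ∂P = ∫ ω, h ω * (P[f|m]) ω ∂P := by
  have hh0 : AEStronglyMeasurable[m0] h P := (hh.mono hm).aestronglyMeasurable
  have hint : Integrable (fun ω => h ω * f ω) P :=
    hf.bdd_mul hh0 (Filter.Eventually.of_forall fun ω => by simpa [Real.norm_eq_abs] using hbd ω)
  have hcm : P[h * f|m] =ᵐ[P] h * P[f|m] :=
    condExp_stronglyMeasurable_mul_of_bound hm hh hf c
      (Filter.Eventually.of_forall (fun ω => by simpa [Real.norm_eq_abs] using hbd ω))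
  have h1 : ∫ ω, h ω * f ω ∂P = ∫ ω, (P[h * f|m]) ω ∂P := (integral_condExp hm).symm
  rw [h1, integral_congr_ae hcm]
  rfl

/-- the minimal entropy element of a pasting-stable family of densities
inherits the conditional `L log L` bound of any element of the family. -/
theorem minimal_entropy_RLLogL
    {Ω : Type*} {m0 : MeasurableSpace Ω} (P : Measure Ω) [IsProbabilityMeasure P]
    (ℱ : Filtration ℝ m0) (T : ℝ) (hT : 0 < T)
    (husual : UsualConditions ℱ P) (hFT : (ℱ T : MeasurableSpace Ω) = m0)
    (𝒵 : Set (ℝ → Ω → ℝ)) (hne : 𝒵.Nonempty)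
    (hmem : ∀ Z ∈ 𝒵,
      (∀ t ∈ Icc (0 : ℝ) T, ∀ ω, 0 < Z t ω) ∧
      (∀ ω, CadlagOn T (fun t => Z t ω)) ∧
      MartingaleOn ℱ P T Z ∧
      (∀ᵐ ω ∂P, Z 0 ω = 1) ∧
      Integrable (fun ω => Z T ω * Real.log (Z T ω)) P)
    (hpaste : ∀ Z ∈ 𝒵, ∀ Zh ∈ 𝒵, ∀ (σ : Ω → ℝ) (hσ : IsStoppingTime ℱ (fun ω => (σ ω : WithTop ℝ))),
      (∀ ω, σ ω ∈ Icc (0 : ℝ) T) →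
      ∀ A : Set Ω, MeasurableSet[hσ.measurableSpace] A →
      (fun (t : ℝ) (ω : Ω) =>
        if t < σ ω then Zh t ω
        else A.indicator (fun ω' => Z t ω' / Z (σ ω') ω' * Zh (σ ω') ω') ω
          + Aᶜ.indicator (fun ω' => Zh t ω') ω) ∈ 𝒵)
    (Zhat : ℝ → Ω → ℝ) (hZhat : Zhat ∈ 𝒵)
    (hmin : ∀ Z ∈ 𝒵,
      ∫ ω, Zhat T ω * Real.log (Zhat T ω) ∂P ≤ ∫ ω, Z T ω * Real.log (Z T ω) ∂P)
    (Z : ℝ → Ω → ℝ) (hZ : Z ∈ 𝒵) (K : ℝ)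
    (hK : ∀ (τ : Ω → ℝ) (hτ : IsStoppingTime ℱ (fun ω => (τ ω : WithTop ℝ))), (∀ ω, τ ω ∈ Icc (0 : ℝ) T) →
      ∀ᵐ ω ∂P,
        (P[fun ω' => (Z T ω' / Z (τ ω') ω') * Real.log (Z T ω' / Z (τ ω') ω')
          | hτ.measurableSpace]) ω ≤ K) :
    ∀ (τ : Ω → ℝ) (hτ : IsStoppingTime ℱ (fun ω => (τ ω : WithTop ℝ))), (∀ ω, τ ω ∈ Icc (0 : ℝ) T) →
      ∀ᵐ ω ∂P,
        (P[fun ω' => (Zhat T ω' / Zhat (τ ω') ω') * Real.log (Zhat T ω' / Zhat (τ ω') ω')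
          | hτ.measurableSpace]) ω ≤ K := by
  classical
  intro τ hτ hrτ
  obtain ⟨hZpos, hZcad, hZmart, hZ0, hZent⟩ := hmem Z hZ
  obtain ⟨hHpos, hHcad, hHmart, hH0, hHent⟩ := hmem Zhat hZhat
  have h0T : (0:ℝ) ∈ Icc (0:ℝ) T := ⟨le_refl 0, hT.le⟩
  have hTT : T ∈ Icc (0:ℝ) T := ⟨hT.le, le_rfl⟩
  haveI : (ae P).NeBot := ae_neBot.2 (IsProbabilityMeasure.ne_zero P)
  -- 0 ≤ K
  have hK0 : (0:ℝ) ≤ K := by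
    have h := hK (fun _ => T) (isStoppingTime_const ℱ T) (fun _ => hTT)
    have hzero : (fun ω' => (Z T ω' / Z ((fun _ : Ω => T) ω') ω') *
        Real.log (Z T ω' / Z ((fun _ : Ω => T) ω') ω')) = (fun _ : Ω => (0:ℝ)) := by
      funext ω'
      simp [div_self (ne_of_gt (hZpos T hTT ω'))]
    rw [hzero] at h
    have hz : P[(fun _ : Ω => (0:ℝ))|(isStoppingTime_const ℱ T).measurableSpace]
        = (fun _ : Ω => (0:ℝ)) := condExp_zero
    rw [hz] at h
    obtain ⟨ω, hω⟩ := h.exists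
    simpa using hω
  have hmle : hτ.measurableSpace ≤ m0 := hτ.measurableSpace_le_of_le (fun ω => WithTop.coe_le_coe.2 (hrτ ω).2)
  set gh : Ω → ℝ := fun ω' => (Zhat T ω' / Zhat (τ ω') ω') *
      Real.log (Zhat T ω' / Zhat (τ ω') ω') with hghdef
  by_cases hghint : Integrable gh P
  swap
  · rw [condExp_of_not_integrable hghint]
    exact Filter.Eventually.of_forall fun ω => by simpa using hK0
  -- stopped value of Zhat
  set V : Ω → ℝ := fun ω => Zhat (τ ω) ω with hVdef
  have hVsm : StronglyMeasurable[hτ.measurableSpace] V :=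
    stoppedValue_stronglyMeasurable_of_rightContinuous hT husual.1 hHmart.1
      (fun ω t ht => (hHcad ω).1 t ht) hτ hrτ
  have hVpos : ∀ ω, 0 < V ω := fun ω => hHpos _ (hrτ ω) ω
  have hZTpos : ∀ ω, 0 < Zhat T ω := fun ω => hHpos T hTT ω
  -- expectation one for members
  have hexp1 : ∀ W, W ∈ 𝒵 → ∫ ω, W T ω ∂P = 1 := by
    intro W hW
    obtain ⟨-, -, hmart, hone, -⟩ := hmem W hW
    have hcond0 := hmart.2.2 0 T h0T hTT hT.le
    have h1 : ∫ ω, W T ω ∂P = ∫ ω, (P[W T|ℱ 0]) ω ∂P := (integral_condExp (ℱ.le 0)).symm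
    rw [h1, integral_congr_ae hcond0, integral_congr_ae hone]
    simp
  -- the pasted processes
  set YT : Ω → ℝ := fun ω' => Z T ω' / Z (τ ω') ω' * Zhat (τ ω') ω' with hYTdef
  set Pas : Set Ω → ℝ → Ω → ℝ := fun B t ω =>
    if t < τ ω then Zhat t ω
    else B.indicator (fun ω' => Z t ω' / Z (τ ω') ω' * Zhat (τ ω') ω') ω
      + Bᶜ.indicator (fun ω' => Zhat t ω') ω with hPasdef
  have hPasmem : ∀ B : Set Ω, MeasurableSet[hτ.measurableSpace] B → Pas B ∈ 𝒵 := by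
    intro B hB
    exact hpaste Z hZ Zhat hZhat τ hτ hrτ B hB
  have hPasT : ∀ B ω, Pas B T ω = B.indicator YT ω + Bᶜ.indicator (fun ω' => Zhat T ω') ω := by
    intro B ω
    rw [hPasdef]
    simp only []
    rw [if_neg (not_lt.2 (hrτ ω).2)]
  have hPuT : Pas Set.univ T = YT := by
    funext ω
    rw [hPasT]
    simp
  have hYTint : Integrable YT P := by
    have := (hmem _ (hPasmem Set.univ MeasurableSet.univ)).2.2.1.2.1 T hTT
    rwa [hPuT] at this
  have hYTlogint : Integrable (fun ω => YT ω * Real.log (YT ω)) P := by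
    have := (hmem _ (hPasmem Set.univ MeasurableSet.univ)).2.2.2.2
    rwa [hPuT] at this
  have hHTint : Integrable (Zhat T) P := hHmart.2.1 T hTT
  -- set integral equality
  have hsetEq : ∀ B : Set Ω, MeasurableSet[hτ.measurableSpace] B →
      ∫ ω in B, YT ω ∂P = ∫ ω in B, Zhat T ω ∂P := by
    intro B hB
    have hBm0 : MeasurableSet[m0] B := hmle _ hB
    have hWmem := hPasmem B hB
    have hWint : Integrable (Pas B T) P := (hmem _ hWmem).2.2.1.2.1 T hTT
    have h1 : ∫ ω, Pas B T ω ∂P = 1 := hexp1 _ hWmem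
    have hind1 : B.indicator YT = B.indicator (Pas B T) := by
      funext ω
      by_cases hω : ω ∈ B
      · rw [Set.indicator_of_mem hω, Set.indicator_of_mem hω, hPasT,
          Set.indicator_of_mem hω, Set.indicator_of_notMem (by simpa using hω), add_zero]
      · rw [Set.indicator_of_notMem hω, Set.indicator_of_notMem hω]
    have hint1 : Integrable (B.indicator YT) P := by
      rw [hind1]; exact hWint.indicator hBm0
    have hint2 : Integrable (Bᶜ.indicator (fun ω' => Zhat T ω')) P :=
      hHTint.indicator hBm0.compl
    have hsplit : ∫ ω, Pas B T ω ∂P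
        = ∫ ω, B.indicator YT ω ∂P + ∫ ω, Bᶜ.indicator (fun ω' => Zhat T ω') ω ∂P := by
      rw [← integral_add hint1 hint2]
      exact integral_congr_ae (Filter.Eventually.of_forall fun ω => hPasT B ω)
    rw [h1] at hsplit
    have hZsplit : ∫ ω in B, Zhat T ω ∂P + ∫ ω in Bᶜ, Zhat T ω ∂P = 1 := by
      rw [integral_add_compl hBm0 hHTint]
      exact hexp1 Zhat hZhat
    rw [integral_indicator hBm0, integral_indicator hBm0.compl] at hsplit
    linarith
  -- conditional expectation equality
  have hcond : P[YT|hτ.measurableSpace] =ᵐ[P] P[Zhat T|hτ.measurableSpace] := by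
    refine ae_eq_of_forall_setIntegral_eq_of_sigmaFinite' hmle
      (fun s _ _ => integrable_condExp.integrableOn)
      (fun s _ _ => integrable_condExp.integrableOn)
      (fun s hs _ => ?_)
      (stronglyMeasurable_condExp.aestronglyMeasurable)
      (stronglyMeasurable_condExp.aestronglyMeasurable)
    rw [setIntegral_condExp hmle hYTint hs, setIntegral_condExp hmle hHTint hs]
    exact hsetEq s hs
  -- the bad set
  set Gh := P[gh|hτ.measurableSpace] with hGhdef
  set A : Set Ω := {ω | K < Gh ω} with hAdef
  have hAm : MeasurableSet[hτ.measurableSpace] A :=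
    measurableSet_lt measurable_const stronglyMeasurable_condExp.measurable
  have key : ∀ n : ℕ, P (A ∩ V ⁻¹' (Icc ((n:ℝ)+1)⁻¹ ((n:ℝ)+1))) = 0 := by
    intro n
    set c : ℝ := (n:ℝ)+1 with hcdef
    have hn0 : (0:ℝ) ≤ n := Nat.cast_nonneg n
    have hc1 : (1:ℝ) ≤ c := by rw [hcdef]; linarith
    have hc0 : (0:ℝ) < c := by linarith
    set An : Set Ω := A ∩ V ⁻¹' (Icc c⁻¹ c) with hAndef
    have hAnm : MeasurableSet[hτ.measurableSpace] An :=
      hAm.inter (hVsm.measurable measurableSet_Icc)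
    have hAnm0 : MeasurableSet[m0] An := hmle _ hAnm
    have hWmem : Pas An ∈ 𝒵 := hPasmem An hAnm
    have hWTlogint : Integrable (fun ω => Pas An T ω * Real.log (Pas An T ω)) P :=
      (hmem _ hWmem).2.2.2.2
    -- the modified stopping time
    set τ' : Ω → ℝ := fun ω => if ω ∈ An then τ ω else T with hτ'def
    have hAnFT : MeasurableSet[ℱ T] An :=
      (hτ.measurableSpace_le_of_le_const (fun ω => WithTop.coe_le_coe.2 (hrτ ω).2)) _ hAnm
    have hτ' : IsStoppingTime ℱ (fun ω => (τ' ω : WithTop ℝ)) := by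
      intro t
      simp only [WithTop.coe_le_coe]
      have hset : {ω | τ' ω ≤ t} = (An ∩ {ω | τ ω ≤ t}) ∪ (Anᶜ ∩ {ω | T ≤ t}) := by
        ext ω
        simp only [Set.mem_setOf_eq, Set.mem_union, Set.mem_inter_iff, Set.mem_compl_iff, hτ'def]
        by_cases hω : ω ∈ An <;> simp [hω]
      rw [hset]
      refine MeasurableSet.union (by have h := ((IsStoppingTime.measurableSet _ _).1 hAnm).2 t; simp only [WithTop.coe_le_coe] at h; exact h) ?_
      by_cases hTt : T ≤ t
      · have h2 : Anᶜ ∩ {ω | T ≤ t} = Anᶜ := by ext ω; simp [hTt]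
        rw [h2]
        exact ℱ.mono hTt _ hAnFT.compl
      · have h2 : Anᶜ ∩ {ω | T ≤ t} = (∅ : Set Ω) := by ext ω; simp [hTt]
        rw [h2]
        exact @MeasurableSet.empty _ (ℱ t)
    have hτ'range : ∀ ω, τ' ω ∈ Icc (0:ℝ) T := by
      intro ω
      by_cases hω : ω ∈ An
      · simp only [hτ'def, if_pos hω]; exact hrτ ω
      · simp only [hτ'def, if_neg hω]; exact hTT
    have hττ' : τ ≤ τ' := by
      intro ω
      by_cases hω : ω ∈ An
      · simp only [hτ'def, if_pos hω]; exact le_rfl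
      · simp only [hτ'def, if_neg hω]; exact (hrτ ω).2
    have hm' : hτ.measurableSpace ≤ hτ'.measurableSpace := hτ.measurableSpace_mono hτ' (fun ω => WithTop.coe_le_coe.2 (hττ' ω))
    have hm'le : hτ'.measurableSpace ≤ m0 :=
      hτ'.measurableSpace_le_of_le (fun ω => WithTop.coe_le_coe.2 (hτ'range ω).2)
    set g' : Ω → ℝ := fun ω' => (Z T ω' / Z (τ' ω') ω') * Real.log (Z T ω' / Z (τ' ω') ω')
      with hg'def
    have hKn : ∀ᵐ ω ∂P, (P[g'|hτ'.measurableSpace]) ω ≤ K := hK τ' hτ' hτ'range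
    have hg'mem : ∀ ω ∈ An, g' ω
        = (Z T ω / Z (τ ω) ω) * Real.log (Z T ω / Z (τ ω) ω) := by
      intro ω hω
      simp only [hg'def, hτ'def, if_pos hω]
    have hg'nmem : ∀ ω ∉ An, g' ω = 0 := by
      intro ω hω
      simp only [hg'def, hτ'def, if_neg hω]
      rw [div_self (ne_of_gt (hZpos T hTT ω)), Real.log_one, mul_zero]
    -- weights
    set w : Ω → ℝ := An.indicator V with hwdef
    set hw : Ω → ℝ := An.indicator (fun ω => Real.log (V ω)) with hhwdef
    have hw_sm : StronglyMeasurable[hτ.measurableSpace] w :=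
      (hVsm.measurable.indicator hAnm).stronglyMeasurable
    have hhw_sm : StronglyMeasurable[hτ.measurableSpace] hw :=
      ((Real.measurable_log.comp hVsm.measurable).indicator hAnm).stronglyMeasurable
    have hw_nonneg : ∀ ω, 0 ≤ w ω := by
      intro ω
      by_cases hω : ω ∈ An
      · rw [hwdef, Set.indicator_of_mem hω]; exact (hVpos ω).le
      · rw [hwdef, Set.indicator_of_notMem hω]
    have hw_bd : ∀ ω, |w ω| ≤ c := by
      intro ω
      by_cases hω : ω ∈ An
      · rw [hwdef, Set.indicator_of_mem hω, abs_of_pos (hVpos ω)]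
        exact hω.2.2
      · rw [hwdef, Set.indicator_of_notMem hω, abs_zero]; exact hc0.le
    have hhw_bd : ∀ ω, |hw ω| ≤ Real.log c := by
      intro ω
      by_cases hω : ω ∈ An
      · have h1 : c⁻¹ ≤ V ω := hω.2.1
        have h2 : V ω ≤ c := hω.2.2
        rw [hhwdef, Set.indicator_of_mem hω, abs_le]
        constructor
        · rw [← Real.log_inv]
          exact (Real.log_le_log_iff (by positivity) (hVpos ω)).2 h1
        · exact (Real.log_le_log_iff (hVpos ω) hc0).2 h2
      · rw [hhwdef, Set.indicator_of_notMem hω, abs_zero]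
        exact Real.log_nonneg hc1
    -- integrable products
    have hhwZT : Integrable (fun ω => hw ω * Zhat T ω) P :=
      hHTint.bdd_mul ((hhw_sm.mono hmle).aestronglyMeasurable)
        (Filter.Eventually.of_forall fun ω => by simpa [Real.norm_eq_abs] using hhw_bd ω)
    have hhwYT : Integrable (fun ω => hw ω * YT ω) P :=
      hYTint.bdd_mul ((hhw_sm.mono hmle).aestronglyMeasurable)
        (Filter.Eventually.of_forall fun ω => by simpa [Real.norm_eq_abs] using hhw_bd ω)
    -- decompositions
    have hdec1 : ∀ ω, An.indicator (fun ω' => Zhat T ω' * Real.log (Zhat T ω')) ω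
        = w ω * gh ω + hw ω * Zhat T ω := by
      intro ω
      by_cases hω : ω ∈ An
      · rw [Set.indicator_of_mem hω, hwdef, hhwdef, Set.indicator_of_mem hω,
          Set.indicator_of_mem hω, hghdef]
        have hV0 : V ω ≠ 0 := (hVpos ω).ne'
        have hZT0 : Zhat T ω ≠ 0 := (hZTpos ω).ne'
        show Zhat T ω * Real.log (Zhat T ω)
          = V ω * (Zhat T ω / Zhat (τ ω) ω * Real.log (Zhat T ω / Zhat (τ ω) ω))
            + Real.log (V ω) * Zhat T ω
        have hVτ : Zhat (τ ω) ω = V ω := rfl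
        rw [hVτ, Real.log_div hZT0 hV0]
        field_simp
        ring
      · rw [Set.indicator_of_notMem hω, hwdef, hhwdef, Set.indicator_of_notMem hω,
          Set.indicator_of_notMem hω, zero_mul, zero_mul, add_zero]
    have hdec2 : ∀ ω, An.indicator (fun ω' => YT ω' * Real.log (YT ω')) ω
        = w ω * g' ω + hw ω * YT ω := by
      intro ω
      by_cases hω : ω ∈ An
      · rw [Set.indicator_of_mem hω, hwdef, hhwdef, Set.indicator_of_mem hω,
          Set.indicator_of_mem hω, hg'mem ω hω]
        have hV0 : V ω ≠ 0 := (hVpos ω).ne'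
        have hR : 0 < Z T ω / Z (τ ω) ω :=
          div_pos (hZpos T hTT ω) (hZpos (τ ω) (hrτ ω) ω)
        have hYTω : YT ω = (Z T ω / Z (τ ω) ω) * V ω := rfl
        rw [hYTω, Real.log_mul hR.ne' hV0]
        ring
      · rw [Set.indicator_of_notMem hω, hwdef, hhwdef, Set.indicator_of_notMem hω,
          Set.indicator_of_notMem hω, zero_mul, zero_mul, add_zero]
    -- integrability of the indicator pieces
    have hIndF1 : Integrable (An.indicator (fun ω' => Zhat T ω' * Real.log (Zhat T ω'))) P :=
      hHent.indicator hAnm0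
    have hIndF1c : Integrable (Anᶜ.indicator (fun ω' => Zhat T ω' * Real.log (Zhat T ω'))) P :=
      hHent.indicator hAnm0.compl
    have hWdec : ∀ ω, Pas An T ω * Real.log (Pas An T ω)
        = An.indicator (fun ω' => YT ω' * Real.log (YT ω')) ω
          + Anᶜ.indicator (fun ω' => Zhat T ω' * Real.log (Zhat T ω')) ω := by
      intro ω
      rw [hPasT An ω]
      by_cases hω : ω ∈ An
      · simp only [Set.indicator_of_mem hω,
          Set.indicator_of_notMem (show ω ∉ Anᶜ by simpa using hω), add_zero]
      · simp only [Set.indicator_of_notMem hω,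
          Set.indicator_of_mem (show ω ∈ Anᶜ by simpa using hω), zero_add]
    have hIndF2 : Integrable (An.indicator (fun ω' => YT ω' * Real.log (YT ω'))) P := by
      have heq : An.indicator (fun ω' => YT ω' * Real.log (YT ω'))
          = An.indicator (fun ω => Pas An T ω * Real.log (Pas An T ω)) := by
        funext ω
        by_cases hω : ω ∈ An
        · simp only [Set.indicator_of_mem hω, hWdec ω,
            Set.indicator_of_notMem (show ω ∉ Anᶜ by simpa using hω), add_zero]
        · simp only [Set.indicator_of_notMem hω]
      rw [heq]
      exact hWTlogint.indicator hAnm0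
    -- the minimality inequality restricted to An
    have hMn : ∫ ω, An.indicator (fun ω' => Zhat T ω' * Real.log (Zhat T ω')) ω ∂P
        ≤ ∫ ω, An.indicator (fun ω' => YT ω' * Real.log (YT ω')) ω ∂P := by
      have h0 := hmin _ hWmem
      have hL : ∫ ω, Zhat T ω * Real.log (Zhat T ω) ∂P
          = ∫ ω, An.indicator (fun ω' => Zhat T ω' * Real.log (Zhat T ω')) ω ∂P
            + ∫ ω, Anᶜ.indicator (fun ω' => Zhat T ω' * Real.log (Zhat T ω')) ω ∂P := by
        rw [← integral_add hIndF1 hIndF1c]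
        refine integral_congr_ae (Filter.Eventually.of_forall fun ω => ?_)
        by_cases hω : ω ∈ An
        · simp only [Set.indicator_of_mem hω,
            Set.indicator_of_notMem (show ω ∉ Anᶜ by simpa using hω), add_zero]
        · simp only [Set.indicator_of_notMem hω,
            Set.indicator_of_mem (show ω ∈ Anᶜ by simpa using hω), zero_add]
      have hR : ∫ ω, Pas An T ω * Real.log (Pas An T ω) ∂P
          = ∫ ω, An.indicator (fun ω' => YT ω' * Real.log (YT ω')) ω ∂P
            + ∫ ω, Anᶜ.indicator (fun ω' => Zhat T ω' * Real.log (Zhat T ω')) ω ∂P := by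
        rw [← integral_add hIndF2 hIndF1c]
        exact integral_congr_ae (Filter.Eventually.of_forall hWdec)
      rw [hL, hR] at h0
      linarith
    -- integrability of weighted terms
    have hwgh_int : Integrable (fun ω => w ω * gh ω) P := by
      have heq : (fun ω => w ω * gh ω)
          = fun ω => An.indicator (fun ω' => Zhat T ω' * Real.log (Zhat T ω')) ω
            - hw ω * Zhat T ω := by
        funext ω
        have := hdec1 ω
        linarith
      rw [heq]
      exact hIndF1.sub hhwZT
    have hwg'_int : Integrable (fun ω => w ω * g' ω) P := by
      have heq : (fun ω => w ω * g' ω)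
          = fun ω => An.indicator (fun ω' => YT ω' * Real.log (YT ω')) ω - hw ω * YT ω := by
        funext ω
        have := hdec2 ω
        linarith
      rw [heq]
      exact hIndF2.sub hhwYT
    have hg'_int : Integrable g' P := by
      have heq : g' = fun ω => (An.indicator (fun ω' => (V ω')⁻¹) ω) * (w ω * g' ω) := by
        funext ω
        by_cases hω : ω ∈ An
        · rw [Set.indicator_of_mem hω, hwdef, Set.indicator_of_mem hω]
          have hV0 : V ω ≠ 0 := (hVpos ω).ne'
          field_simp
        · rw [Set.indicator_of_notMem hω, zero_mul]
          exact hg'nmem ω hω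
      rw [heq]
      refine hwg'_int.bdd_mul
        ((((hVsm.measurable.inv).indicator hAnm).stronglyMeasurable.mono hmle).aestronglyMeasurable)
        (c := c) (Filter.Eventually.of_forall fun ω => ?_)
      by_cases hω : ω ∈ An
      · rw [Real.norm_eq_abs, Set.indicator_of_mem hω,
          abs_of_pos (inv_pos.2 (hVpos ω))]
        exact (inv_le_comm₀ (hVpos ω) hc0).2 hω.2.1
      · rw [Real.norm_eq_abs, Set.indicator_of_notMem hω, abs_zero]
        exact hc0.le
    -- cross-term equality via the conditional expectation identity
    have hcross : ∫ ω, hw ω * Zhat T ω ∂P = ∫ ω, hw ω * YT ω ∂P := by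
      rw [integral_mul_eq_integral_mul_condexp P hmle (Real.log c) hhw_sm hhw_bd hHTint,
        integral_mul_eq_integral_mul_condexp P hmle (Real.log c) hhw_sm hhw_bd hYTint]
      refine integral_congr_ae (hcond.mono fun ω hω => ?_)
      show hw ω * (P[Zhat T|hτ.measurableSpace]) ω = hw ω * (P[YT|hτ.measurableSpace]) ω
      rw [hω]
    -- the key inequality
    have hstar : ∫ ω, w ω * gh ω ∂P ≤ ∫ ω, w ω * g' ω ∂P := by
      have e1 : ∫ ω, An.indicator (fun ω' => Zhat T ω' * Real.log (Zhat T ω')) ω ∂P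
          = ∫ ω, w ω * gh ω ∂P + ∫ ω, hw ω * Zhat T ω ∂P := by
        rw [← integral_add hwgh_int hhwZT]
        exact integral_congr_ae (Filter.Eventually.of_forall hdec1)
      have e2 : ∫ ω, An.indicator (fun ω' => YT ω' * Real.log (YT ω')) ω ∂P
          = ∫ ω, w ω * g' ω ∂P + ∫ ω, hw ω * YT ω ∂P := by
        rw [← integral_add hwg'_int hhwYT]
        exact integral_congr_ae (Filter.Eventually.of_forall hdec2)
      linarith
    -- replace gh by its conditional expectation on the left
    have hLHS : ∫ ω, w ω * gh ω ∂P = ∫ ω, w ω * Gh ω ∂P :=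
      integral_mul_eq_integral_mul_condexp P hmle c hw_sm hw_bd hghint
    -- bound the right side by K
    have hwm' : StronglyMeasurable[hτ'.measurableSpace] w := hw_sm.mono hm'
    have hRHS1 : ∫ ω, w ω * g' ω ∂P
        = ∫ ω, w ω * (P[g'|hτ'.measurableSpace]) ω ∂P :=
      integral_mul_eq_integral_mul_condexp P hm'le c hwm' hw_bd hg'_int
    have hwK_int : Integrable (fun ω => w ω * K) P :=
      (integrable_const K).bdd_mul ((hw_sm.mono hmle).aestronglyMeasurable)
        (Filter.Eventually.of_forall fun ω => by simpa [Real.norm_eq_abs] using hw_bd ω)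
    have hwcond_int : Integrable (fun ω => w ω * (P[g'|hτ'.measurableSpace]) ω) P :=
      integrable_condExp.bdd_mul ((hw_sm.mono hmle).aestronglyMeasurable)
        (Filter.Eventually.of_forall fun ω => by simpa [Real.norm_eq_abs] using hw_bd ω)
    have hRHS2 : ∫ ω, w ω * (P[g'|hτ'.measurableSpace]) ω ∂P ≤ ∫ ω, w ω * K ∂P :=
      integral_mono_ae hwcond_int hwK_int
        (hKn.mono fun ω hω => mul_le_mul_of_nonneg_left hω (hw_nonneg ω))
    have hwGh_int : Integrable (fun ω => w ω * Gh ω) P :=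
      integrable_condExp.bdd_mul ((hw_sm.mono hmle).aestronglyMeasurable)
        (Filter.Eventually.of_forall fun ω => by simpa [Real.norm_eq_abs] using hw_bd ω)
    -- conclude P An = 0
    have hfinal : ∫ ω, (w ω * Gh ω - w ω * K) ∂P ≤ 0 := by
      rw [integral_sub hwGh_int hwK_int]
      linarith
    have hq0 : ∀ ω, 0 ≤ w ω * Gh ω - w ω * K := by
      intro ω
      by_cases hω : ω ∈ An
      · have hwω : w ω = V ω := Set.indicator_of_mem hω V
        have hGK : K < Gh ω := hω.1
        rw [hwω]
        have h1 : V ω * K ≤ V ω * Gh ω := mul_le_mul_of_nonneg_left hGK.le (hVpos ω).le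
        linarith
      · rw [hwdef, Set.indicator_of_notMem hω, zero_mul, zero_mul, sub_zero]
    have hqint : Integrable (fun ω => w ω * Gh ω - w ω * K) P := hwGh_int.sub hwK_int
    have hzero : ∫ ω, (w ω * Gh ω - w ω * K) ∂P = 0 :=
      le_antisymm hfinal (integral_nonneg hq0)
    have hae2 : (fun ω => w ω * Gh ω - w ω * K) =ᵐ[P] 0 :=
      (integral_eq_zero_iff_of_nonneg hq0 hqint).1 hzero
    have h0' : ∀ᵐ ω ∂P, w ω * Gh ω - w ω * K = 0 := by
      filter_upwards [hae2] with ω hω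
      simpa using hω
    rw [ae_iff] at h0'
    refine measure_mono_null ?_ h0'
    intro ω hω
    have hwω : w ω = V ω := Set.indicator_of_mem hω V
    have hGK : K < Gh ω := hω.1
    have hpos : 0 < w ω * Gh ω - w ω * K := by
      rw [hwω]
      nlinarith [hVpos ω]
    simp only [Set.mem_setOf_eq]
    exact ne_of_gt hpos
  -- combine over n
  have hAsub : A ⊆ ⋃ n : ℕ, (A ∩ V ⁻¹' (Icc ((n:ℝ)+1)⁻¹ ((n:ℝ)+1))) := by
    intro ω hω
    obtain ⟨n, hn⟩ := exists_nat_ge (max (V ω) (V ω)⁻¹)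
    have h1 : V ω ≤ (n:ℝ)+1 := le_trans (le_trans (le_max_left _ _) hn) (by linarith)
    have h2 : ((n:ℝ)+1)⁻¹ ≤ V ω := by
      have hinv : (V ω)⁻¹ ≤ (n:ℝ)+1 := le_trans (le_trans (le_max_right _ _) hn) (by linarith)
      exact (inv_le_comm₀ (by positivity) (hVpos ω)).2 hinv
    exact Set.mem_iUnion.2 ⟨n, hω, h2, h1⟩
  have hPA : P A = 0 := measure_mono_null hAsub (measure_iUnion_null key)
  rw [ae_iff]
  have hset2 : {ω | ¬ Gh ω ≤ K} = A := by
    ext ω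
    simp [hAdef, not_le]
  rw [hset2]
  exact hPA
end

section
/- Let Y be a nonnegative random variable on a probability space with E[Y] ≤ 1. Let C ≥ 1, δ ∈ (0,1] and p > 1 be constants such that for every λ > 1, E[ Y·1_{{Y > λ}} ] ≤ (2Cp/(2p−1))·λ·P( Y ≥ δλ/C ). If θ := (2C(p−1)/(2p−1))·(C/δ)^p < 1, then E[ Y^p·1_{{Y > 1}} ] ≤ 2/(1−θ), and consequently E[Y^p] ≤ 1 + 2/(1−θ). -/
open MeasureTheory Set Filter Topology

open scoped ENNReal NNReal

private lemma gl_pointwise (p : ℝ) (hp : 1 < p) (y : ℝ) (hy : 0 ≤ y) :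
    (∫⁻ l in Ioi (1:ℝ), (Iio y).indicator
        (fun l => ENNReal.ofReal ((p - 1) * l ^ (p - 2) * y)) l) =
      ENNReal.ofReal (y ^ p - y) := by
  have hp0 : (0:ℝ) < p := by linarith
  rw [lintegral_indicator measurableSet_Iio, Measure.restrict_restrict measurableSet_Iio]
  rw [Set.Iio_inter_Ioi]
  rcases le_or_gt y 1 with h | h
  · rw [Set.Ioo_eq_empty (by linarith), Measure.restrict_empty, lintegral_zero_measure]
    symm
    rw [ENNReal.ofReal_eq_zero, sub_nonpos]
    rcases eq_or_lt_of_le hy with h0 | h0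
    · rw [← h0, Real.zero_rpow hp0.ne']
    · calc y ^ p ≤ y ^ (1:ℝ) := Real.rpow_le_rpow_of_exponent_ge h0 h (by linarith)
        _ = y := Real.rpow_one y
  · -- 1 < y
    have hy0 : (0:ℝ) < y := by linarith
    have hInt : IntegrableOn (fun l => (p - 1) * l ^ (p - 2) * y) (Ioo 1 y) := by
      apply (ContinuousOn.integrableOn_compact isCompact_Icc ?_).mono_set Set.Ioo_subset_Icc_self
      apply ContinuousOn.mul (ContinuousOn.mul continuousOn_const ?_) continuousOn_const
      intro l hl
      exact (Real.continuousAt_rpow_const l (p - 2)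
        (Or.inl (by intro h0; rw [h0] at hl; exact absurd hl.1 (by norm_num)))).continuousWithinAt
    have hnn : 0 ≤ᵐ[volume.restrict (Ioo 1 y)] fun l => (p - 1) * l ^ (p - 2) * y := by
      filter_upwards [self_mem_ae_restrict measurableSet_Ioo] with l hl
      have hl0 : (0:ℝ) ≤ l := by linarith [hl.1]
      have h2 := Real.rpow_nonneg hl0 (p - 2)
      have h3 : (0:ℝ) ≤ p - 1 := by linarith
      exact mul_nonneg (mul_nonneg h3 h2) hy
    rw [← MeasureTheory.ofReal_integral_eq_lintegral_ofReal hInt hnn]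
    congr 1
    have heq : (fun l : ℝ => (p - 1) * l ^ (p - 2) * y) =
        fun l : ℝ => ((p - 1) * y) * l ^ (p - 2) := by funext l; ring
    rw [heq, integral_const_mul, ← integral_Ioc_eq_integral_Ioo,
      ← intervalIntegral.integral_of_le h.le,
      integral_rpow (Or.inl (by linarith : (-1:ℝ) < p - 2))]
    have h21 : p - 2 + 1 = p - 1 := by ring
    rw [h21, Real.one_rpow]
    have h1 : y ^ (1 + (p - 1)) = y * y ^ (p - 1) := by
      rw [Real.rpow_add hy0, Real.rpow_one]
    have h2 : (1:ℝ) + (p - 1) = p := by ring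
    rw [h2] at h1
    have hpne : p - 1 ≠ 0 := by intro h0; rw [sub_eq_zero] at h0; exact absurd h0.symm hp.ne
    field_simp
    nlinarith [h1]

private lemma gl_bounded
    {Ω : Type*} {m0 : MeasurableSpace Ω} (P : Measure Ω) [IsProbabilityMeasure P]
    (Y : Ω → ℝ) (hYmeas : Measurable Y) (hYnn : ∀ ω, 0 ≤ Y ω)
    (M : ℝ) (hM1 : 1 ≤ M) (hYb : ∀ ω, Y ω ≤ M)
    (hYmean : (∫⁻ ω, ENNReal.ofReal (Y ω) ∂P) ≤ 1)
    (C δ p : ℝ) (hC : 1 ≤ C) (hδ0 : 0 < δ) (hδ1 : δ ≤ 1) (hp : 1 < p)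
    (hgood : ∀ l : ℝ, 1 < l →
      (∫⁻ ω in {ω | l < Y ω}, ENNReal.ofReal (Y ω) ∂P) ≤
        ENNReal.ofReal (2 * C * p / (2 * p - 1) * l) * P {ω | δ * l / C ≤ Y ω})
    (θ : ℝ) (hθdef : θ = 2 * C * (p - 1) / (2 * p - 1) * (C / δ) ^ p) (hθ : θ < 1) :
    (∫⁻ ω in {ω | 1 < Y ω}, ENNReal.ofReal (Y ω ^ p) ∂P) ≤ ENNReal.ofReal (2 / (1 - θ)) := by
  have hp0 : (0:ℝ) < p := by linarith
  have hC0 : (0:ℝ) < C := by linarith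
  have h2p : (0:ℝ) < 2 * p - 1 := by linarith
  set K : ℝ := 2 * C * p / (2 * p - 1) with hKdef
  have hK0 : 0 < K := by positivity
  have hθ0 : 0 ≤ θ := by
    rw [hθdef]
    have h1 : (0:ℝ) ≤ (C / δ) ^ p := Real.rpow_nonneg (by positivity) p
    exact mul_nonneg (div_nonneg (by nlinarith) h2p.le) h1
  have hsmeas : MeasurableSet {ω | 1 < Y ω} := measurableSet_lt measurable_const hYmeas
  set A := ∫⁻ ω in {ω | 1 < Y ω}, ENNReal.ofReal (Y ω ^ p) ∂P with hAdef
  -- finiteness of A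
  have hAfin : A ≠ ⊤ := by
    have hle : A ≤ ENNReal.ofReal (M ^ p) := by
      calc A ≤ ∫⁻ _ω in {ω | 1 < Y ω}, ENNReal.ofReal (M ^ p) ∂P := by
              apply lintegral_mono fun ω => ?_
              exact ENNReal.ofReal_le_ofReal (Real.rpow_le_rpow (hYnn ω) (hYb ω) hp0.le)
        _ = ENNReal.ofReal (M ^ p) * P {ω | 1 < Y ω} := by
              rw [lintegral_const, Measure.restrict_apply_univ]
        _ ≤ ENNReal.ofReal (M ^ p) * 1 := by
              exact mul_le_mul_right prob_le_one _
        _ = ENNReal.ofReal (M ^ p) := mul_one _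
    exact ne_top_of_le_ne_top ENNReal.ofReal_ne_top hle
  -- the double-integral function
  set f : Ω → ℝ → ℝ≥0∞ := fun ω l =>
    {q : Ω × ℝ | q.2 < Y q.1}.indicator
      (fun q => ENNReal.ofReal ((p - 1) * q.2 ^ (p - 2) * Y q.1)) (ω, l) with hfdef
  have hfmeas : Measurable (Function.uncurry f) := by
    apply Measurable.indicator
    · fun_prop
    · exact measurableSet_lt measurable_snd (hYmeas.comp measurable_fst)
  -- pointwise identity
  have key : ∀ ω, (∫⁻ l in Ioi (1:ℝ), f ω l) = ENNReal.ofReal (Y ω ^ p - Y ω) := by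
    intro ω
    have : ∀ l : ℝ, f ω l = (Iio (Y ω)).indicator
        (fun l => ENNReal.ofReal ((p - 1) * l ^ (p - 2) * Y ω)) l := by
      intro l
      simp only [hfdef, Set.indicator, Set.mem_setOf_eq, Set.mem_Iio]
    simp_rw [this]
    exact gl_pointwise p hp (Y ω) (hYnn ω)
  -- Tonelli
  have swap : (∫⁻ ω, ∫⁻ l in Ioi (1:ℝ), f ω l ∂(volume) ∂P) =
      ∫⁻ l in Ioi (1:ℝ), ∫⁻ ω, f ω l ∂P ∂(volume) :=
    lintegral_lintegral_swap hfmeas.aemeasurable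
  -- inner bound
  set J := ∫⁻ l in Ioi (1:ℝ), P {ω | δ * l / C ≤ Y ω} * ENNReal.ofReal (l ^ (p - 1))
    with hJdef
  have inner : ∀ l ∈ Ioi (1:ℝ), (∫⁻ ω, f ω l ∂P) ≤
      ENNReal.ofReal ((p - 1) * K) * (P {ω | δ * l / C ≤ Y ω} * ENNReal.ofReal (l ^ (p - 1))) := by
    intro l hl
    rw [Set.mem_Ioi] at hl
    have hl0 : (0:ℝ) < l := by linarith
    have hcnn : (0:ℝ) ≤ (p - 1) * l ^ (p - 2) :=
      mul_nonneg (by linarith) (Real.rpow_nonneg hl0.le _)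
    have hfl : ∀ ω, f ω l = {ω | l < Y ω}.indicator
        (fun ω => ENNReal.ofReal ((p - 1) * l ^ (p - 2)) * ENNReal.ofReal (Y ω)) ω := by
      intro ω
      simp only [hfdef, Set.indicator, Set.mem_setOf_eq]
      rw [← ENNReal.ofReal_mul hcnn]
    simp_rw [hfl]
    rw [lintegral_indicator (measurableSet_lt measurable_const hYmeas),
      lintegral_const_mul _ hYmeas.ennreal_ofReal]
    calc ENNReal.ofReal ((p - 1) * l ^ (p - 2)) * ∫⁻ ω in {ω | l < Y ω}, ENNReal.ofReal (Y ω) ∂P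
        ≤ ENNReal.ofReal ((p - 1) * l ^ (p - 2)) *
            (ENNReal.ofReal (K * l) * P {ω | δ * l / C ≤ Y ω}) :=
          mul_le_mul_right (hgood l hl) _
      _ = ENNReal.ofReal ((p - 1) * l ^ (p - 2) * (K * l)) * P {ω | δ * l / C ≤ Y ω} := by
          rw [ENNReal.ofReal_mul hcnn, mul_assoc]
      _ = ENNReal.ofReal ((p - 1) * K * l ^ (p - 1)) * P {ω | δ * l / C ≤ Y ω} := by
          congr 2
          have h2 : l ^ (p - 2) * l = l ^ (p - 1) := by
            have := Real.rpow_add hl0 (p - 2) 1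
            rw [Real.rpow_one] at this
            rw [← this]
            congr 1
            ring
          calc (p - 1) * l ^ (p - 2) * (K * l) = (p - 1) * K * (l ^ (p - 2) * l) := by ring
            _ = (p - 1) * K * l ^ (p - 1) := by rw [h2]
      _ = ENNReal.ofReal ((p - 1) * K) *
            (P {ω | δ * l / C ≤ Y ω} * ENNReal.ofReal (l ^ (p - 1))) := by
          rw [ENNReal.ofReal_mul (mul_nonneg (by linarith : (0:ℝ) ≤ p - 1) hK0.le)]
          ring
  have step1 : (∫⁻ ω, ∫⁻ l in Ioi (1:ℝ), f ω l ∂(volume) ∂P) ≤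
      ENNReal.ofReal ((p - 1) * K) * J := by
    rw [swap, hJdef, ← lintegral_const_mul' _ _ ENNReal.ofReal_ne_top]
    exact setLIntegral_mono_ae' measurableSet_Ioi (ae_of_all _ inner)
  -- layer cake for E
  set E := ∫⁻ ω, ENNReal.ofReal (Y ω ^ p) ∂P with hEdef
  have hlayer : ENNReal.ofReal p * J ≤ ENNReal.ofReal ((C / δ) ^ p) * E := by
    have hZnn : 0 ≤ᵐ[P] fun ω => (C / δ) * Y ω :=
      ae_of_all _ fun ω => mul_nonneg (by positivity) (hYnn ω)
    have hZmeas : AEMeasurable (fun ω => (C / δ) * Y ω) P :=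
      (hYmeas.const_mul _).aemeasurable
    have hZ := lintegral_rpow_eq_lintegral_meas_le_mul P hZnn hZmeas hp0
    have hsets : ∀ t : ℝ, {a | t ≤ (C / δ) * Y a} = {a | δ * t / C ≤ Y a} := by
      intro t
      ext a
      simp only [Set.mem_setOf_eq]
      rw [div_mul_eq_mul_div, le_div_iff₀ hδ0, div_le_iff₀ hC0]
      constructor <;> intro h <;> nlinarith
    simp_rw [hsets] at hZ
    have hZlhs : (∫⁻ ω, ENNReal.ofReal (((C / δ) * Y ω) ^ p) ∂P) =
        ENNReal.ofReal ((C / δ) ^ p) * E := by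
      rw [hEdef, ← lintegral_const_mul' _ _ ENNReal.ofReal_ne_top]
      congr 1
      funext ω
      rw [Real.mul_rpow (by positivity) (hYnn ω), ENNReal.ofReal_mul (Real.rpow_nonneg (by positivity) _)]
    rw [hZlhs] at hZ
    rw [hZ]
    exact mul_le_mul_right (lintegral_mono_set (Set.Ioi_subset_Ioi (by norm_num))) _
  have hcoef : ENNReal.ofReal ((p - 1) * K) * J ≤ ENNReal.ofReal θ * E := by
    have h1 : ENNReal.ofReal ((p - 1) * K) * J =
        ENNReal.ofReal ((p - 1) * K / p) * (ENNReal.ofReal p * J) := by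
      have hnn : (0:ℝ) ≤ (p - 1) * K / p := div_nonneg (mul_nonneg (by linarith) hK0.le) hp0.le
      rw [← mul_assoc, ← ENNReal.ofReal_mul hnn]
      congr 2
      field_simp
    rw [h1]
    calc ENNReal.ofReal ((p - 1) * K / p) * (ENNReal.ofReal p * J)
        ≤ ENNReal.ofReal ((p - 1) * K / p) * (ENNReal.ofReal ((C / δ) ^ p) * E) :=
          mul_le_mul_right hlayer _
      _ = ENNReal.ofReal ((p - 1) * K / p * (C / δ) ^ p) * E := by
          rw [← mul_assoc, ← ENNReal.ofReal_mul
            (div_nonneg (mul_nonneg (by linarith) hK0.le) hp0.le)]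
      _ = ENNReal.ofReal θ * E := by
          congr 2
          rw [hθdef, hKdef]
          field_simp
  -- E ≤ 1 + A
  have hE : E ≤ 1 + A := by
    rw [hEdef, ← lintegral_add_compl (fun ω => ENNReal.ofReal (Y ω ^ p)) hsmeas]
    have hcompl : (∫⁻ ω in {ω | 1 < Y ω}ᶜ, ENNReal.ofReal (Y ω ^ p) ∂P) ≤ 1 := by
      calc (∫⁻ ω in {ω | 1 < Y ω}ᶜ, ENNReal.ofReal (Y ω ^ p) ∂P)
          ≤ ∫⁻ _ω in {ω | 1 < Y ω}ᶜ, 1 ∂P := by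
            apply setLIntegral_mono' hsmeas.compl
            intro ω hω
            simp only [Set.mem_compl_iff, Set.mem_setOf_eq, not_lt] at hω
            rw [← ENNReal.ofReal_one]
            exact ENNReal.ofReal_le_ofReal (Real.rpow_le_one (hYnn ω) hω hp0.le)
        _ = P {ω | 1 < Y ω}ᶜ := by rw [lintegral_one, Measure.restrict_apply_univ]
        _ ≤ 1 := prob_le_one
    calc A + (∫⁻ ω in {ω | 1 < Y ω}ᶜ, ENNReal.ofReal (Y ω ^ p) ∂P) ≤ A + 1 :=
          add_le_add_right hcompl _
      _ = 1 + A := add_comm _ _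
  -- main chain
  have main : A ≤ 1 + ENNReal.ofReal θ * (1 + A) := by
    have hsplit : A = (∫⁻ ω in {ω | 1 < Y ω}, ENNReal.ofReal (Y ω) ∂P) +
        ∫⁻ ω in {ω | 1 < Y ω}, ENNReal.ofReal (Y ω ^ p - Y ω) ∂P := by
      rw [hAdef, ← lintegral_add_left hYmeas.ennreal_ofReal]
      apply setLIntegral_congr_fun hsmeas
      intro ω hω
      rw [Set.mem_setOf_eq] at hω
      have h1 : Y ω ≤ Y ω ^ p := by
        calc Y ω = Y ω ^ (1:ℝ) := (Real.rpow_one _).symm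
          _ ≤ Y ω ^ p := Real.rpow_le_rpow_of_exponent_le (by linarith) hp.le
      beta_reduce
      rw [← ENNReal.ofReal_add (hYnn ω) (by linarith)]
      congr 1
      ring
    calc A ≤ (∫⁻ ω, ENNReal.ofReal (Y ω) ∂P) +
            ∫⁻ ω, ENNReal.ofReal (Y ω ^ p - Y ω) ∂P := by
          rw [hsplit]
          exact add_le_add (setLIntegral_le_lintegral _ _) (setLIntegral_le_lintegral _ _)
      _ ≤ 1 + ∫⁻ ω, ∫⁻ l in Ioi (1:ℝ), f ω l ∂(volume) ∂P := by
          apply add_le_add hYmean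
          apply le_of_eq
          exact lintegral_congr fun ω => (key ω).symm
      _ ≤ 1 + ENNReal.ofReal ((p - 1) * K) * J := add_le_add_right step1 _
      _ ≤ 1 + ENNReal.ofReal θ * E := add_le_add_right hcoef _
      _ ≤ 1 + ENNReal.ofReal θ * (1 + A) := add_le_add_right (mul_le_mul_right hE _) _
  -- real arithmetic
  have h1θ : (0:ℝ) < 1 - θ := by linarith
  have h1Afin : (1 : ℝ≥0∞) + A ≠ ⊤ := by
    rw [ENNReal.add_ne_top]; exact ⟨ENNReal.one_ne_top, hAfin⟩
  have hRHSfin : (1 : ℝ≥0∞) + ENNReal.ofReal θ * (1 + A) ≠ ⊤ := by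
    rw [ENNReal.add_ne_top]
    exact ⟨ENNReal.one_ne_top, ENNReal.mul_ne_top ENNReal.ofReal_ne_top h1Afin⟩
  set a := A.toReal with hadef
  have ha0 : 0 ≤ a := ENNReal.toReal_nonneg
  have hareal : a ≤ 1 + θ * (1 + a) := by
    have h2 := ENNReal.toReal_mono hRHSfin main
    rw [ENNReal.toReal_add ENNReal.one_ne_top
        (ENNReal.mul_ne_top ENNReal.ofReal_ne_top h1Afin), ENNReal.toReal_mul,
      ENNReal.toReal_add ENNReal.one_ne_top hAfin, ENNReal.toReal_ofReal hθ0,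
      ENNReal.toReal_one] at h2
    exact h2
  have hfinal : a ≤ 2 / (1 - θ) := by
    rw [le_div_iff₀ h1θ]
    nlinarith
  calc A = ENNReal.ofReal a := (ENNReal.ofReal_toReal hAfin).symm
    _ ≤ ENNReal.ofReal (2 / (1 - θ)) := ENNReal.ofReal_le_ofReal hfinal


/-- the good-lambda / Gehring-type integration step producing an `L^p`
bound from a family of distributional inequalities. -/
theorem good_lambda_integration
    {Ω : Type*} {m0 : MeasurableSpace Ω} (P : Measure Ω) [IsProbabilityMeasure P]
    (Y : Ω → ℝ) (hYmeas : Measurable Y) (hYnn : ∀ ω, 0 ≤ Y ω)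
    (hYmean : (∫⁻ ω, ENNReal.ofReal (Y ω) ∂P) ≤ 1)
    (C δ p : ℝ) (hC : 1 ≤ C) (hδ0 : 0 < δ) (hδ1 : δ ≤ 1) (hp : 1 < p)
    (hgood : ∀ l : ℝ, 1 < l →
      (∫⁻ ω in {ω | l < Y ω}, ENNReal.ofReal (Y ω) ∂P) ≤
        ENNReal.ofReal (2 * C * p / (2 * p - 1) * l) * P {ω | δ * l / C ≤ Y ω})
    (θ : ℝ) (hθdef : θ = 2 * C * (p - 1) / (2 * p - 1) * (C / δ) ^ p) (hθ : θ < 1) :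
    (∫⁻ ω in {ω | 1 < Y ω}, ENNReal.ofReal (Y ω ^ p) ∂P) ≤ ENNReal.ofReal (2 / (1 - θ)) ∧
      (∫⁻ ω, ENNReal.ofReal (Y ω ^ p) ∂P) ≤ ENNReal.ofReal (1 + 2 / (1 - θ)) := by
  have hp0 : (0:ℝ) < p := by linarith
  have hC0 : (0:ℝ) < C := by linarith
  have hsmeas : MeasurableSet {ω | 1 < Y ω} := measurableSet_lt measurable_const hYmeas
  -- truncations
  set Z : ℕ → Ω → ℝ := fun n ω => min (Y ω) ((n:ℝ) + 2) with hZdef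
  have hZmeas : ∀ n, Measurable (Z n) := fun n => hYmeas.min measurable_const
  have hZnn : ∀ n ω, 0 ≤ Z n ω := fun n ω => le_min (hYnn ω) (by positivity)
  have hZle : ∀ n ω, Z n ω ≤ Y ω := fun n ω => min_le_left _ _
  have hZset : ∀ n, {ω | 1 < Z n ω} = {ω | 1 < Y ω} := by
    intro n
    ext ω
    simp only [Set.mem_setOf_eq, hZdef, lt_min_iff]
    constructor
    · exact fun h => h.1
    · exact fun h => ⟨h, by push_cast; linarith⟩
  -- each truncation satisfies the good-lambda hypothesis
  have hmain : ∀ n : ℕ, (∫⁻ ω in {ω | 1 < Y ω}, ENNReal.ofReal (Z n ω ^ p) ∂P) ≤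
      ENNReal.ofReal (2 / (1 - θ)) := by
    intro n
    rw [← hZset n]
    apply gl_bounded P (Z n) (hZmeas n) (hZnn n) ((n:ℝ) + 2) (by push_cast; linarith)
      (fun ω => min_le_right _ _)
      (le_trans (lintegral_mono fun ω => ENNReal.ofReal_le_ofReal (hZle n ω)) hYmean)
      C δ p hC hδ0 hδ1 hp ?_ θ hθdef hθ
    intro l hl
    rcases le_or_gt ((n:ℝ) + 2) l with hcase | hcase
    · have hempty : {ω | l < Z n ω} = ∅ := by
        ext ω
        simp only [Set.mem_setOf_eq, Set.mem_empty_iff_false, iff_false, not_lt, hZdef]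
        exact le_trans (min_le_right _ _) hcase
      rw [hempty, Measure.restrict_empty, lintegral_zero_measure]
      exact zero_le
    · have hδlC : δ * l / C ≤ (n:ℝ) + 2 := by
        have h1 : δ * l / C ≤ l := by
          rw [div_le_iff₀ hC0]
          nlinarith
        linarith
      have hset1 : {ω | l < Z n ω} = {ω | l < Y ω} := by
        ext ω
        simp only [Set.mem_setOf_eq, hZdef, lt_min_iff]
        exact ⟨fun h => h.1, fun h => ⟨h, hcase⟩⟩
      have hset2 : {ω | δ * l / C ≤ Z n ω} = {ω | δ * l / C ≤ Y ω} := by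
        ext ω
        simp only [Set.mem_setOf_eq, hZdef, le_min_iff]
        exact ⟨fun h => h.1, fun h => ⟨h, hδlC⟩⟩
      rw [hset1, hset2]
      calc (∫⁻ ω in {ω | l < Y ω}, ENNReal.ofReal (Z n ω) ∂P)
          ≤ ∫⁻ ω in {ω | l < Y ω}, ENNReal.ofReal (Y ω) ∂P :=
            lintegral_mono fun ω => ENNReal.ofReal_le_ofReal (hZle n ω)
        _ ≤ ENNReal.ofReal (2 * C * p / (2 * p - 1) * l) * P {ω | δ * l / C ≤ Y ω} :=
            hgood l hl
  -- monotone convergence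
  have hmono : Monotone fun n : ℕ => fun ω => ENNReal.ofReal (Z n ω ^ p) := by
    intro n m hnm
    intro ω
    apply ENNReal.ofReal_le_ofReal
    apply Real.rpow_le_rpow (hZnn n ω) _ hp0.le
    have hc : ((n:ℝ)) ≤ (m:ℝ) := Nat.cast_le.2 hnm
    exact min_le_min le_rfl (by linarith)
  have hsup : ∀ ω, (⨆ n : ℕ, ENNReal.ofReal (Z n ω ^ p)) = ENNReal.ofReal (Y ω ^ p) := by
    intro ω
    apply le_antisymm
    · apply iSup_le
      intro n
      exact ENNReal.ofReal_le_ofReal (Real.rpow_le_rpow (hZnn n ω) (hZle n ω) hp0.le)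
    · obtain ⟨n, hn⟩ := exists_nat_ge (Y ω)
      have : Z n ω = Y ω := min_eq_left (by push_cast; linarith)
      calc ENNReal.ofReal (Y ω ^ p) = ENNReal.ofReal (Z n ω ^ p) := by rw [this]
        _ ≤ ⨆ n : ℕ, ENNReal.ofReal (Z n ω ^ p) := le_iSup (fun n : ℕ => ENNReal.ofReal (Z n ω ^ p)) n
  have hfm : ∀ n : ℕ, Measurable fun ω => ENNReal.ofReal (Z n ω ^ p) := by
    intro n
    have h := hZmeas n
    fun_prop
  have hMCT : (∫⁻ ω in {ω | 1 < Y ω}, ENNReal.ofReal (Y ω ^ p) ∂P) =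
      ⨆ n : ℕ, ∫⁻ ω in {ω | 1 < Y ω}, ENNReal.ofReal (Z n ω ^ p) ∂P := by
    rw [← lintegral_iSup hfm hmono]
    congr 1
    funext ω
    exact (hsup ω).symm
  have part1 : (∫⁻ ω in {ω | 1 < Y ω}, ENNReal.ofReal (Y ω ^ p) ∂P) ≤
      ENNReal.ofReal (2 / (1 - θ)) := by
    rw [hMCT]
    exact iSup_le hmain
  refine ⟨part1, ?_⟩
  have hθ0 : 0 ≤ θ := by
    rw [hθdef]
    have h1 : (0:ℝ) ≤ (C / δ) ^ p := Real.rpow_nonneg (by positivity) p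
    have h2p : (0:ℝ) < 2 * p - 1 := by linarith
    exact mul_nonneg (div_nonneg (by nlinarith) h2p.le) h1
  have h1θ : (0:ℝ) < 1 - θ := by linarith
  have h2div : (0:ℝ) ≤ 2 / (1 - θ) := by positivity
  rw [← lintegral_add_compl (fun ω => ENNReal.ofReal (Y ω ^ p)) hsmeas]
  have hcompl : (∫⁻ ω in {ω | 1 < Y ω}ᶜ, ENNReal.ofReal (Y ω ^ p) ∂P) ≤ 1 := by
    calc (∫⁻ ω in {ω | 1 < Y ω}ᶜ, ENNReal.ofReal (Y ω ^ p) ∂P)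
        ≤ ∫⁻ _ω in {ω | 1 < Y ω}ᶜ, 1 ∂P := by
          apply setLIntegral_mono' hsmeas.compl
          intro ω hω
          simp only [Set.mem_compl_iff, Set.mem_setOf_eq, not_lt] at hω
          rw [← ENNReal.ofReal_one]
          exact ENNReal.ofReal_le_ofReal (Real.rpow_le_one (hYnn ω) hω hp0.le)
      _ = P {ω | 1 < Y ω}ᶜ := by rw [lintegral_one, Measure.restrict_apply_univ]
      _ ≤ 1 := prob_le_one
  calc (∫⁻ ω in {ω | 1 < Y ω}, ENNReal.ofReal (Y ω ^ p) ∂P) +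
        (∫⁻ ω in {ω | 1 < Y ω}ᶜ, ENNReal.ofReal (Y ω ^ p) ∂P)
      ≤ ENNReal.ofReal (2 / (1 - θ)) + 1 := add_le_add part1 hcompl
    _ = ENNReal.ofReal (1 + 2 / (1 - θ)) := by
        rw [ENNReal.ofReal_add (by norm_num) h2div, ENNReal.ofReal_one, add_comm]
end
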